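/- For every (r, r′) ∈ ℂ², the family t¹(r, r′) is an admissible solution for (r, r′), and t¹(r, r′)(0, 0) = 1/Γ(r+ρ). -/

import Mathlib

noncomputable section

/-- ρ = (n-1)/2 as a complex number. -/
def rho (n : ℕ) : ℂ := ((n : ℂ) - 1) / 2

/-- ρ' = (n-2)/2 as a complex number. -/
def rho' (n : ℕ) : ℂ := ((n : ℂ) - 2) / 2

/-- A diagonal sequence for `(r, r')`. -/
def IsDiagSeq (n : ℕ) (r r' : ℂ) (s : ℕ → ℂ) : Prop :=
  ∀ α : ℕ, (2*r' + 2*(α : ℂ) + (n : ℂ) - 2) * s α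
    = (2*r + 2*(α : ℂ) + (n : ℂ) - 1) * s (α + 1)

/-- L_even. -/
def Leven (n : ℕ) : Set (ℂ × ℂ) :=
  {p | ∃ i j : ℕ, p.1 = -rho n - (i : ℂ) ∧ p.2 = -rho' n - (j : ℂ) ∧ ∃ k : ℕ, i = j + 2*k}

/-- L_odd. -/
def Lodd (n : ℕ) : Set (ℂ × ℂ) :=
  {p | ∃ i j : ℕ, p.1 = -rho n - (i : ℂ) ∧ p.2 = -rho' n - (j : ℂ) ∧ ∃ k : ℕ, i = j + 2*k + 1}

/-- An admissible solution `t : ℕ × ℕ → ℂ` for `(r, r')`: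
`t(α,α') = 0` when `α' > α` or `α − α'` is odd (equivalently `α + α'` is odd),
and the relations (R1), (R2) hold for all `α ≥ α'` with `α − α'` even.
The natural-subtraction index `α - 1` is harmless, since in (R1) its coefficient
`(α − α')` vanishes when `α = α'`, and in (R2) we have `α ≥ α' ≥ 1`. -/
def IsAdmissible (n : ℕ) (r r' : ℂ) (t : ℕ → ℕ → ℂ) : Prop :=
  (∀ α α' : ℕ, (α < α' ∨ Odd (α + α')) → t α α' = 0) ∧
  (∀ α α' : ℕ, α' ≤ α → Even (α + α') →
    ((2*(α : ℂ) + (n : ℂ) - 2) * (2*r' + 2*(α' : ℂ) + (n : ℂ) - 2) * t α α'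
      = ((α : ℂ) + (α' : ℂ) + (n : ℂ) - 2) * (2*r + 2*(α : ℂ) + (n : ℂ) - 1)
          * t (α + 1) (α' + 1)
        + ((α : ℂ) - (α' : ℂ)) * (2*r - 2*(α : ℂ) - (n : ℂ) + 3)
          * t (α - 1) (α' + 1)) ∧
    (1 ≤ α' →
      (2*(α : ℂ) + (n : ℂ) - 2) * (2*r' - 2*(α' : ℂ) - (n : ℂ) + 4) * t α α'
      = ((α : ℂ) - (α' : ℂ) + 1) * (2*r + 2*(α : ℂ) + (n : ℂ) - 1)
          * t (α + 1) (α' - 1)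
        + ((α : ℂ) + (α' : ℂ) + (n : ℂ) - 3) * (2*r - 2*(α : ℂ) - (n : ℂ) + 3)
          * t (α - 1) (α' - 1)))

/-- The spectral function `t¹(r,r')` of Corollary 4.12 (1):
`t¹(r,r')(α,α') = (r'+ρ')_{α'} · Σ_{k=0}^{(α−α')/2} 2^{4k} ((α+α'+n−2)/2)_k (−(α−α')/2)_k
((2r+2r'+1)/4)_k ((2r−2r'+1)/4)_k / (2k)! · (1/Γ(r+ρ+α'+2k))`
for `α' ≤ α` with `α − α'` even, and `0` otherwise. -/
def t1 (n : ℕ) (r r' : ℂ) (α α' : ℕ) : ℂ :=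
  if α < α' ∨ Odd (α + α') then 0
  else (ascPochhammer ℂ α').eval (r' + rho' n) *
    ∑ k ∈ Finset.range ((α - α') / 2 + 1),
      (2 : ℂ)^(4*k) * (ascPochhammer ℂ k).eval (((α : ℂ) + (α' : ℂ) + (n : ℂ) - 2)/2) *
        (ascPochhammer ℂ k).eval (-(((α : ℂ) - (α' : ℂ))/2)) *
        (ascPochhammer ℂ k).eval ((2*r + 2*r' + 1)/4) *
        (ascPochhammer ℂ k).eval ((2*r - 2*r' + 1)/4) / ((2*k).factorial : ℂ) *
        (Complex.Gamma (r + rho n + (α' : ℂ) + 2*(k : ℂ)))⁻¹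

abbrev PP (k : ℕ) (x : ℂ) : ℂ := (ascPochhammer ℂ k).eval x
abbrev GG (z : ℂ) : ℂ := (Complex.Gamma z)⁻¹
abbrev cf (r r' a b : ℂ) (k : ℕ) : ℂ :=
  (2 : ℂ)^(4*k) * PP k a * PP k b * PP k ((2*r + 2*r' + 1)/4) * PP k ((2*r - 2*r' + 1)/4)
    / ((2*k).factorial : ℂ)

lemma GG_step (z : ℂ) : GG z = z * GG (z+1) := by
  rcases eq_or_ne z 0 with h | h
  · simp [GG, h, Complex.Gamma_zero]
  · rw [GG, GG, Complex.Gamma_add_one z h, mul_inv, ← mul_assoc, mul_inv_cancel₀ h, one_mul]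

lemma PP_succ (k : ℕ) (x : ℂ) : PP (k+1) x = PP k x * (x + k) := ascPochhammer_succ_eval k x

lemma PP_succ_left (k : ℕ) (x : ℂ) : PP (k+1) x = x * PP k (x+1) := by
  simp only [PP, ascPochhammer_succ_left, Polynomial.eval_mul, Polynomial.eval_comp,
    Polynomial.eval_X, Polynomial.eval_add, Polynomial.eval_one]

lemma PP_shift (k : ℕ) (x : ℂ) : x * PP k (x+1) = PP k x * (x + k) := by
  rw [← PP_succ_left, PP_succ]

lemma PP_neg_nat (K : ℕ) : PP (K+1) (-(K:ℂ)) = 0 := by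
  rw [PP_succ]; simp

lemma cf_zero (r r' a b : ℂ) : cf r r' a b 0 = 1 := by
  simp [cf, PP, ascPochhammer_zero, Polynomial.eval_one]

lemma t1_conv (n : ℕ) (r r' : ℂ) (α' K : ℕ) (a b : ℂ) (g : ℕ → ℂ)
    (ha : ((((α'+2*K : ℕ)) : ℂ) + (α' : ℂ) + (n : ℂ) - 2)/2 = a)
    (hb : -(((((α'+2*K : ℕ)) : ℂ) - (α' : ℂ))/2) = b)
    (hg : ∀ k : ℕ, r + ((n:ℂ)-1)/2 + (α' : ℂ) + 2*(k : ℂ) = g k) :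
    t1 n r r' (α'+2*K) α' = (ascPochhammer ℂ α').eval (r' + ((n:ℂ)-2)/2) *
      ∑ k ∈ Finset.range (K+1), cf r r' a b k * GG (g k) := by
  have hcond : ¬(α'+2*K < α' ∨ Odd (α'+2*K+α')) := by
    push_neg
    refine ⟨by omega, ?_⟩
    rw [Nat.odd_iff]; omega
  rw [t1, if_neg hcond]
  rw [show (α'+2*K - α')/2 + 1 = K+1 from by omega]
  simp only [rho, rho']
  congr 1
  refine Finset.sum_congr rfl fun k _ => ?_
  rw [← ha, ← hb, ← hg k]

lemma keyR1' (r r' x y ν a b PA PA1 PB PB1 kk : ℂ)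
    (ha : a = (x+y+ν-2)/2) (hb : b = -((x-y)/2))
    (hA : a * PA1 = PA * (a + kk)) (hB : b * PB1 = PB * (b + kk)) :
    (2*x+ν-2) * (2*r'+2*y+ν-2) * (PA*PB) * (r+(ν-1)/2+y+2*kk)
    = (x+y+ν-2)*(2*r+2*x+ν-1)*(r'+(ν-2)/2+y) * (PA1*PB)
      + (x-y)*(2*r-2*x-ν+3)*(r'+(ν-2)/2+y) * (PA*PB1) := by
  subst ha hb
  linear_combination (-(2*(2*r+2*x+ν-1)*(r'+(ν-2)/2+y)*PB)) * hA
    + (2*(2*r-2*x-ν+3)*(r'+(ν-2)/2+y)*PA) * hB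

lemma sumR1 (n : ℕ) (r r' : ℂ) (α' K : ℕ) :
    (2*((α':ℂ)+2*(K:ℂ))+(n:ℂ)-2) * (2*r'+2*(α':ℂ)+(n:ℂ)-2) *
      ∑ k ∈ Finset.range (K+1),
        cf r r' ((α':ℂ)+(K:ℂ)+((n:ℂ)-2)/2) (-(K:ℂ)) k
          * GG (r + ((n:ℂ)-1)/2 + (α':ℂ) + 2*(k:ℂ))
    = ((α':ℂ)+2*(K:ℂ)+(α':ℂ)+(n:ℂ)-2)*(2*r+2*((α':ℂ)+2*(K:ℂ))+(n:ℂ)-1)*(r'+((n:ℂ)-2)/2+(α':ℂ)) *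
      ∑ k ∈ Finset.range (K+1),
        cf r r' ((α':ℂ)+(K:ℂ)+((n:ℂ)-2)/2+1) (-(K:ℂ)) k
          * GG (r + ((n:ℂ)-1)/2 + (α':ℂ) + (2*(k:ℂ)+1))
    + ((α':ℂ)+2*(K:ℂ)-(α':ℂ))*(2*r-2*((α':ℂ)+2*(K:ℂ))-(n:ℂ)+3)*(r'+((n:ℂ)-2)/2+(α':ℂ)) *
      ∑ k ∈ Finset.range (K+1),
        cf r r' ((α':ℂ)+(K:ℂ)+((n:ℂ)-2)/2) (-(K:ℂ)+1) k
          * GG (r + ((n:ℂ)-1)/2 + (α':ℂ) + (2*(k:ℂ)+1)) := by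
  rw [Finset.mul_sum, Finset.mul_sum, Finset.mul_sum, ← Finset.sum_add_distrib]
  refine Finset.sum_congr rfl fun k _ => ?_
  have hG : GG (r + ((n:ℂ)-1)/2 + (α':ℂ) + 2*(k:ℂ))
      = (r + ((n:ℂ)-1)/2 + (α':ℂ) + 2*(k:ℂ)) * GG (r + ((n:ℂ)-1)/2 + (α':ℂ) + (2*(k:ℂ)+1)) := by
    rw [GG_step (r + ((n:ℂ)-1)/2 + (α':ℂ) + 2*(k:ℂ)),
      show r + ((n:ℂ)-1)/2 + (α':ℂ) + 2*(k:ℂ) + 1 = r + ((n:ℂ)-1)/2 + (α':ℂ) + (2*(k:ℂ)+1) from by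
        ring]
  rw [hG]
  have key := keyR1' r r' ((α':ℂ)+2*(K:ℂ)) (α':ℂ) (n:ℂ)
    ((α':ℂ)+(K:ℂ)+((n:ℂ)-2)/2) (-(K:ℂ))
    (PP k ((α':ℂ)+(K:ℂ)+((n:ℂ)-2)/2)) (PP k ((α':ℂ)+(K:ℂ)+((n:ℂ)-2)/2+1))
    (PP k (-(K:ℂ))) (PP k (-(K:ℂ)+1)) (k:ℂ)
    (by ring) (by ring)
    (PP_shift k ((α':ℂ)+(K:ℂ)+((n:ℂ)-2)/2)) (PP_shift k (-(K:ℂ)))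
  simp only [cf]
  linear_combination ((2:ℂ)^(4*k) * PP k ((2*r+2*r'+1)/4) * PP k ((2*r-2*r'+1)/4)
    / ((2*k).factorial : ℂ) * GG (r + ((n:ℂ)-1)/2 + (α':ℂ) + (2*(k:ℂ)+1))) * key
set_option maxHeartbeats 2000000

lemma sumR2 (n : ℕ) (r r' : ℂ) (β K : ℕ) :
    (2*((β:ℂ)+1+2*(K:ℂ))+(n:ℂ)-2) * (2*r'-2*((β:ℂ)+1)-(n:ℂ)+4) * (r'+((n:ℂ)-2)/2+(β:ℂ)) *
      ∑ k ∈ Finset.range (K+2), cf r r' ((β:ℂ)+(K:ℂ)+(n:ℂ)/2) (-(K:ℂ)) (k) * GG ((r + ((n:ℂ)-1)/2 + (β:ℂ)) + (2*((k : ℕ) : ℂ)+1))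
    = (((β:ℂ)+1+2*(K:ℂ))-((β:ℂ)+1)+1)*(2*r+2*((β:ℂ)+1+2*(K:ℂ))+(n:ℂ)-1) *
      ∑ k ∈ Finset.range (K+2), cf r r' ((β:ℂ)+(K:ℂ)+(n:ℂ)/2) (-(K:ℂ)-1) (k) * GG ((r + ((n:ℂ)-1)/2 + (β:ℂ)) + 2*((k : ℕ) : ℂ))
    + (((β:ℂ)+1+2*(K:ℂ))+((β:ℂ)+1)+(n:ℂ)-3)*(2*r-2*((β:ℂ)+1+2*(K:ℂ))-(n:ℂ)+3) *
      ∑ k ∈ Finset.range (K+2), cf r r' (((β:ℂ)+(K:ℂ)+(n:ℂ)/2)-1) (-(K:ℂ)) (k) * GG ((r + ((n:ℂ)-1)/2 + (β:ℂ)) + 2*((k : ℕ) : ℂ)) := by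
  have perk0 : ((2*((β:ℂ)+1+2*(K:ℂ))+(n:ℂ)-2) * (2*r'-2*((β:ℂ)+1)-(n:ℂ)+4) * (r'+((n:ℂ)-2)/2+(β:ℂ)) * (cf r r' ((β:ℂ)+(K:ℂ)+(n:ℂ)/2) (-(K:ℂ)) (0) * GG ((r + ((n:ℂ)-1)/2 + (β:ℂ)) + (2*((0 : ℕ) : ℂ)+1))) - ((((β:ℂ)+1+2*(K:ℂ))-((β:ℂ)+1)+1)*(2*r+2*((β:ℂ)+1+2*(K:ℂ))+(n:ℂ)-1) * (cf r r' ((β:ℂ)+(K:ℂ)+(n:ℂ)/2) (-(K:ℂ)-1) (0) * GG ((r + ((n:ℂ)-1)/2 + (β:ℂ)) + 2*((0 : ℕ) : ℂ))) + (((β:ℂ)+1+2*(K:ℂ))+((β:ℂ)+1)+(n:ℂ)-3)*(2*r-2*((β:ℂ)+1+2*(K:ℂ))-(n:ℂ)+3) * (cf r r' (((β:ℂ)+(K:ℂ)+(n:ℂ)/2)-1) (-(K:ℂ)) (0) * GG ((r + ((n:ℂ)-1)/2 + (β:ℂ)) + 2*((0 : ℕ) : ℂ))))) = cf r r' ((β:ℂ)+(K:ℂ)+(n:ℂ)/2)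 (-(K:ℂ)) (0) * (((2*((β:ℂ)+1+2*(K:ℂ))+(n:ℂ)-2) * (2*r'-2*((β:ℂ)+1)-(n:ℂ)+4) * (r'+((n:ℂ)-2)/2+(β:ℂ)) - (r + ((n:ℂ)-1)/2 + (β:ℂ))*((((β:ℂ)+1+2*(K:ℂ))-((β:ℂ)+1)+1)*(2*r+2*((β:ℂ)+1+2*(K:ℂ))+(n:ℂ)-1)+(((β:ℂ)+1+2*(K:ℂ))+((β:ℂ)+1)+(n:ℂ)-3)*(2*r-2*((β:ℂ)+1+2*(K:ℂ))-(n:ℂ)+3))) - 4*(2*((β:ℂ)+1+2*(K:ℂ))+(n:ℂ)-2)*((0 : ℕ) : ℂ)*(2*r+2*((0 : ℕ) : ℂ)+1)) * GG ((r + ((n:ℂ)-1)/2 + (β:ℂ)) + (2*((0 : ℕ) : ℂ)+1)) := by 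
    have hG : GG ((r + ((n:ℂ)-1)/2 + (β:ℂ)) + 2*((0 : ℕ) : ℂ)) = ((r + ((n:ℂ)-1)/2 + (β:ℂ)) + 2*((0 : ℕ) : ℂ)) * GG ((r + ((n:ℂ)-1)/2 + (β:ℂ)) + (2*((0 : ℕ) : ℂ)+1)) := by
      rw [GG_step ((r + ((n:ℂ)-1)/2 + (β:ℂ)) + 2*((0 : ℕ) : ℂ)),
        show (r + ((n:ℂ)-1)/2 + (β:ℂ)) + 2*((0 : ℕ) : ℂ) + 1 = (r + ((n:ℂ)-1)/2 + (β:ℂ)) + (2*((0 : ℕ) : ℂ)+1) from by ring]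
    simp only [cf_zero]
    rw [hG]
    push_cast
    ring
  have perkS : ∀ j : ℕ, ((2*((β:ℂ)+1+2*(K:ℂ))+(n:ℂ)-2) * (2*r'-2*((β:ℂ)+1)-(n:ℂ)+4) * (r'+((n:ℂ)-2)/2+(β:ℂ)) * (cf r r' ((β:ℂ)+(K:ℂ)+(n:ℂ)/2) (-(K:ℂ)) (j+1) * GG ((r + ((n:ℂ)-1)/2 + (β:ℂ)) + (2*((j+1 : ℕ) : ℂ)+1))) - ((((β:ℂ)+1+2*(K:ℂ))-((β:ℂ)+1)+1)*(2*r+2*((β:ℂ)+1+2*(K:ℂ))+(n:ℂ)-1) * (cf r r' ((β:ℂ)+(K:ℂ)+(n:ℂ)/2) (-(K:ℂ)-1) (j+1) * GG ((r + ((n:ℂ)-1)/2 + (β:ℂ)) + 2*((j+1 : ℕ) : ℂ))) + (((β:ℂ)+1+2*(K:ℂ))+((β:ℂ)+1)+(n:ℂ)-3)*(2*r-2*((β:ℂ)+1+2*(K:ℂ))-(n:ℂ)+3) * (cf r r' (((β:ℂ)+(K:ℂ)+(n:ℂ)/2)-1) (-(K:ℂ)) (j+1) * GG ((r + ((n:ℂ)-1)/2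 + (β:ℂ)) + 2*((j+1 : ℕ) : ℂ)))))
      = cf r r' ((β:ℂ)+(K:ℂ)+(n:ℂ)/2) (-(K:ℂ)) (j+1) * (((2*((β:ℂ)+1+2*(K:ℂ))+(n:ℂ)-2) * (2*r'-2*((β:ℂ)+1)-(n:ℂ)+4) * (r'+((n:ℂ)-2)/2+(β:ℂ)) - (r + ((n:ℂ)-1)/2 + (β:ℂ))*((((β:ℂ)+1+2*(K:ℂ))-((β:ℂ)+1)+1)*(2*r+2*((β:ℂ)+1+2*(K:ℂ))+(n:ℂ)-1)+(((β:ℂ)+1+2*(K:ℂ))+((β:ℂ)+1)+(n:ℂ)-3)*(2*r-2*((β:ℂ)+1+2*(K:ℂ))-(n:ℂ)+3))) - 4*(2*((β:ℂ)+1+2*(K:ℂ))+(n:ℂ)-2)*((j+1 : ℕ) : ℂ)*(2*r+2*((j+1 : ℕ) : ℂ)+1)) * GG ((r + ((n:ℂ)-1)/2 + (β:ℂ)) + (2*((j+1 : ℕ) : ℂ)+1)) - cf r r' ((β:ℂ)+(K:ℂ)+(n:ℂ)/2) (-(K:ℂ)) (j) * (((2*((β:ℂ)+1+2*(K:ℂ))+(n:ℂ)-2)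 * (2*r'-2*((β:ℂ)+1)-(n:ℂ)+4) * (r'+((n:ℂ)-2)/2+(β:ℂ)) - (r + ((n:ℂ)-1)/2 + (β:ℂ))*((((β:ℂ)+1+2*(K:ℂ))-((β:ℂ)+1)+1)*(2*r+2*((β:ℂ)+1+2*(K:ℂ))+(n:ℂ)-1)+(((β:ℂ)+1+2*(K:ℂ))+((β:ℂ)+1)+(n:ℂ)-3)*(2*r-2*((β:ℂ)+1+2*(K:ℂ))-(n:ℂ)+3))) - 4*(2*((β:ℂ)+1+2*(K:ℂ))+(n:ℂ)-2)*((j : ℕ) : ℂ)*(2*r+2*((j : ℕ) : ℂ)+1)) * GG ((r + ((n:ℂ)-1)/2 + (β:ℂ)) + (2*((j : ℕ) : ℂ)+1)) := by 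
    intro j
    have hfac : (((2*(j+1)).factorial : ℕ) : ℂ)
        = ((2*j).factorial : ℂ) * ((2*(j:ℂ)+1)*(2*(j:ℂ)+2)) := by
      rw [show 2*(j+1) = (2*j+1)+1 from by omega, Nat.factorial_succ, Nat.factorial_succ]
      push_cast
      ring
    have hpow : (2:ℂ)^(4*(j+1)) = (2:ℂ)^(4*j) * 16 := by
      rw [show 4*(j+1) = 4*j+4 from by omega, pow_add]
      norm_num
    have hPBm : PP (j+1) (-(K:ℂ)-1) = (-(K:ℂ)-1) * PP j (-(K:ℂ)) := by
      rw [PP_succ_left, show -(K:ℂ)-1+1 = -(K:ℂ) from by ring]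
    have hPAm : PP (j+1) (((β:ℂ)+(K:ℂ)+(n:ℂ)/2)-1) = (((β:ℂ)+(K:ℂ)+(n:ℂ)/2)-1) * PP j ((β:ℂ)+(K:ℂ)+(n:ℂ)/2) := by
      rw [PP_succ_left, show ((β:ℂ)+(K:ℂ)+(n:ℂ)/2)-1+1 = ((β:ℂ)+(K:ℂ)+(n:ℂ)/2) from by ring]
    have hG1 : GG ((r + ((n:ℂ)-1)/2 + (β:ℂ)) + 2*(((j+1) : ℕ) : ℂ)) = ((r + ((n:ℂ)-1)/2 + (β:ℂ)) + 2*(((j+1) : ℕ) : ℂ)) * GG ((r + ((n:ℂ)-1)/2 + (β:ℂ)) + (2*(((j+1) : ℕ) : ℂ)+1)) := by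
      rw [GG_step ((r + ((n:ℂ)-1)/2 + (β:ℂ)) + 2*(((j+1) : ℕ) : ℂ)),
        show (r + ((n:ℂ)-1)/2 + (β:ℂ)) + 2*(((j+1) : ℕ) : ℂ) + 1 = (r + ((n:ℂ)-1)/2 + (β:ℂ)) + (2*(((j+1) : ℕ) : ℂ)+1) from by ring]
    have hG2 : GG ((r + ((n:ℂ)-1)/2 + (β:ℂ)) + (2*(j:ℂ)+1))
        = ((r + ((n:ℂ)-1)/2 + (β:ℂ)) + (2*(j:ℂ)+1)) * (((r + ((n:ℂ)-1)/2 + (β:ℂ)) + (2*(j:ℂ)+2)) * GG ((r + ((n:ℂ)-1)/2 + (β:ℂ)) + (2*(((j+1) : ℕ) : ℂ)+1))) := by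
      rw [GG_step ((r + ((n:ℂ)-1)/2 + (β:ℂ)) + (2*(j:ℂ)+1)), GG_step ((r + ((n:ℂ)-1)/2 + (β:ℂ)) + (2*(j:ℂ)+1) + 1),
        show (r + ((n:ℂ)-1)/2 + (β:ℂ)) + (2*(j:ℂ)+1) + 1 + 1 = (r + ((n:ℂ)-1)/2 + (β:ℂ)) + (2*(((j+1) : ℕ) : ℂ)+1) from by push_cast; ring]
      ring
    have hf2 : (2*(j:ℂ)+1) ≠ 0 := by
      have h0 : ((2*j+1 : ℕ) : ℂ) ≠ 0 := Nat.cast_ne_zero.mpr (by omega)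
      push_cast at h0
      exact h0
    have hf3 : (2*(j:ℂ)+2) ≠ 0 := by
      have h0 : ((2*j+2 : ℕ) : ℂ) ≠ 0 := Nat.cast_ne_zero.mpr (by omega)
      push_cast at h0
      exact h0
    have hf1 : ((2*j).factorial : ℂ) ≠ 0 := Nat.cast_ne_zero.mpr (Nat.factorial_ne_zero _)
    have hdiv : ∀ X : ℂ, X / (((2*j).factorial : ℕ) : ℂ)
        = X * ((2*(j:ℂ)+1)*(2*(j:ℂ)+2)) / (((2*(j+1)).factorial : ℕ) : ℂ) := by
      intro X
      rw [hfac]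
      field_simp
    simp only [cf]
    simp only [hdiv]
    rw [hpow, hPBm, hPAm, PP_succ j ((β:ℂ)+(K:ℂ)+(n:ℂ)/2), PP_succ j (-(K:ℂ)), PP_succ j ((2*r + 2*r' + 1)/4),
      PP_succ j ((2*r - 2*r' + 1)/4), hG1, hG2]
    push_cast
    ring
  have hfin : (cf r r' ((β:ℂ)+(K:ℂ)+(n:ℂ)/2) (-(K:ℂ)) (K+1) * (((2*((β:ℂ)+1+2*(K:ℂ))+(n:ℂ)-2) * (2*r'-2*((β:ℂ)+1)-(n:ℂ)+4) * (r'+((n:ℂ)-2)/2+(β:ℂ)) - (r + ((n:ℂ)-1)/2 + (β:ℂ))*((((β:ℂ)+1+2*(K:ℂ))-((β:ℂ)+1)+1)*(2*r+2*((β:ℂ)+1+2*(K:ℂ))+(n:ℂ)-1)+(((β:ℂ)+1+2*(K:ℂ))+((β:ℂ)+1)+(n:ℂ)-3)*(2*r-2*((β:ℂ)+1+2*(K:ℂ))-(n:ℂ)+3))) - 4*(2*((β:ℂ)+1+2*(K:ℂ))+(n:ℂ)-2)*((K+1 : ℕ) : ℂ)*(2*r+2*((K+1 : ℕ) : ℂ)+1))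 : ℂ) = 0 := by 
    have h := PP_neg_nat K
    simp [cf, h]
  have tele := Finset.sum_range_sub (fun i => cf r r' ((β:ℂ)+(K:ℂ)+(n:ℂ)/2) (-(K:ℂ)) (i) * (((2*((β:ℂ)+1+2*(K:ℂ))+(n:ℂ)-2) * (2*r'-2*((β:ℂ)+1)-(n:ℂ)+4) * (r'+((n:ℂ)-2)/2+(β:ℂ)) - (r + ((n:ℂ)-1)/2 + (β:ℂ))*((((β:ℂ)+1+2*(K:ℂ))-((β:ℂ)+1)+1)*(2*r+2*((β:ℂ)+1+2*(K:ℂ))+(n:ℂ)-1)+(((β:ℂ)+1+2*(K:ℂ))+((β:ℂ)+1)+(n:ℂ)-3)*(2*r-2*((β:ℂ)+1+2*(K:ℂ))-(n:ℂ)+3))) - 4*(2*((β:ℂ)+1+2*(K:ℂ))+(n:ℂ)-2)*((i : ℕ) : ℂ)*(2*r+2*((i : ℕ) : ℂ)+1)) * GG ((r + ((n:ℂ)-1)/2 + (β:ℂ)) + (2*((i : ℕ) : ℂ)+1))) (K+1)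
  have split := Finset.sum_range_succ' (fun k => ((2*((β:ℂ)+1+2*(K:ℂ))+(n:ℂ)-2) * (2*r'-2*((β:ℂ)+1)-(n:ℂ)+4) * (r'+((n:ℂ)-2)/2+(β:ℂ)) * (cf r r' ((β:ℂ)+(K:ℂ)+(n:ℂ)/2) (-(K:ℂ)) (k) * GG ((r + ((n:ℂ)-1)/2 + (β:ℂ)) + (2*((k : ℕ) : ℂ)+1))) - ((((β:ℂ)+1+2*(K:ℂ))-((β:ℂ)+1)+1)*(2*r+2*((β:ℂ)+1+2*(K:ℂ))+(n:ℂ)-1) * (cf r r' ((β:ℂ)+(K:ℂ)+(n:ℂ)/2) (-(K:ℂ)-1) (k) * GG ((r + ((n:ℂ)-1)/2 + (β:ℂ)) + 2*((k : ℕ) : ℂ))) + (((β:ℂ)+1+2*(K:ℂ))+((β:ℂ)+1)+(n:ℂ)-3)*(2*r-2*((β:ℂ)+1+2*(K:ℂ))-(n:ℂ)+3) * (cf r r' (((β:ℂ)+(K:ℂ)+(n:ℂ)/2)-1) (-(K:ℂ)) (k) * GG ((r + ((n:ℂ)-1)/2 + (β:ℂ)) + 2*((k : ℕ) : ℂ))))))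 (K+1)
  have total : (∑ k ∈ Finset.range (K+2), ((2*((β:ℂ)+1+2*(K:ℂ))+(n:ℂ)-2) * (2*r'-2*((β:ℂ)+1)-(n:ℂ)+4) * (r'+((n:ℂ)-2)/2+(β:ℂ)) * (cf r r' ((β:ℂ)+(K:ℂ)+(n:ℂ)/2) (-(K:ℂ)) (k) * GG ((r + ((n:ℂ)-1)/2 + (β:ℂ)) + (2*((k : ℕ) : ℂ)+1))) - ((((β:ℂ)+1+2*(K:ℂ))-((β:ℂ)+1)+1)*(2*r+2*((β:ℂ)+1+2*(K:ℂ))+(n:ℂ)-1) * (cf r r' ((β:ℂ)+(K:ℂ)+(n:ℂ)/2) (-(K:ℂ)-1) (k) * GG ((r + ((n:ℂ)-1)/2 + (β:ℂ)) + 2*((k : ℕ) : ℂ))) + (((β:ℂ)+1+2*(K:ℂ))+((β:ℂ)+1)+(n:ℂ)-3)*(2*r-2*((β:ℂ)+1+2*(K:ℂ))-(n:ℂ)+3) * (cf r r' (((β:ℂ)+(K:ℂ)+(n:ℂ)/2)-1) (-(K:ℂ)) (k) * GG ((r + ((n:ℂ)-1)/2 + (β:ℂ)) + 2*((k : ℕ)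 : ℂ)))))) = cf r r' ((β:ℂ)+(K:ℂ)+(n:ℂ)/2) (-(K:ℂ)) (K+1) * (((2*((β:ℂ)+1+2*(K:ℂ))+(n:ℂ)-2) * (2*r'-2*((β:ℂ)+1)-(n:ℂ)+4) * (r'+((n:ℂ)-2)/2+(β:ℂ)) - (r + ((n:ℂ)-1)/2 + (β:ℂ))*((((β:ℂ)+1+2*(K:ℂ))-((β:ℂ)+1)+1)*(2*r+2*((β:ℂ)+1+2*(K:ℂ))+(n:ℂ)-1)+(((β:ℂ)+1+2*(K:ℂ))+((β:ℂ)+1)+(n:ℂ)-3)*(2*r-2*((β:ℂ)+1+2*(K:ℂ))-(n:ℂ)+3))) - 4*(2*((β:ℂ)+1+2*(K:ℂ))+(n:ℂ)-2)*((K+1 : ℕ) : ℂ)*(2*r+2*((K+1 : ℕ) : ℂ)+1)) * GG ((r + ((n:ℂ)-1)/2 + (β:ℂ)) + (2*((K+1 : ℕ) : ℂ)+1)) := by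
    rw [show K+2 = K+1+1 from by omega, split,
      Finset.sum_congr rfl (fun i _ => perkS i), tele, perk0]
    ring
  rw [hfin, zero_mul] at total
  have expand : (∑ k ∈ Finset.range (K+2), ((2*((β:ℂ)+1+2*(K:ℂ))+(n:ℂ)-2) * (2*r'-2*((β:ℂ)+1)-(n:ℂ)+4) * (r'+((n:ℂ)-2)/2+(β:ℂ)) * (cf r r' ((β:ℂ)+(K:ℂ)+(n:ℂ)/2) (-(K:ℂ)) (k) * GG ((r + ((n:ℂ)-1)/2 + (β:ℂ)) + (2*((k : ℕ) : ℂ)+1))) - ((((β:ℂ)+1+2*(K:ℂ))-((β:ℂ)+1)+1)*(2*r+2*((β:ℂ)+1+2*(K:ℂ))+(n:ℂ)-1) * (cf r r' ((β:ℂ)+(K:ℂ)+(n:ℂ)/2) (-(K:ℂ)-1) (k) * GG ((r + ((n:ℂ)-1)/2 + (β:ℂ)) + 2*((k : ℕ) : ℂ))) + (((β:ℂ)+1+2*(K:ℂ))+((β:ℂ)+1)+(n:ℂ)-3)*(2*r-2*((β:ℂ)+1+2*(K:ℂ))-(n:ℂ)+3) * (cf r r' (((β:ℂ)+(K:ℂ)+(n:ℂ)/2)-1)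 (-(K:ℂ)) (k) * GG ((r + ((n:ℂ)-1)/2 + (β:ℂ)) + 2*((k : ℕ) : ℂ))))))
      = (2*((β:ℂ)+1+2*(K:ℂ))+(n:ℂ)-2) * (2*r'-2*((β:ℂ)+1)-(n:ℂ)+4) * (r'+((n:ℂ)-2)/2+(β:ℂ)) * (∑ k ∈ Finset.range (K+2), cf r r' ((β:ℂ)+(K:ℂ)+(n:ℂ)/2) (-(K:ℂ)) (k) * GG ((r + ((n:ℂ)-1)/2 + (β:ℂ)) + (2*((k : ℕ) : ℂ)+1)))
        - ((((β:ℂ)+1+2*(K:ℂ))-((β:ℂ)+1)+1)*(2*r+2*((β:ℂ)+1+2*(K:ℂ))+(n:ℂ)-1) * (∑ k ∈ Finset.range (K+2), cf r r' ((β:ℂ)+(K:ℂ)+(n:ℂ)/2) (-(K:ℂ)-1) (k) * GG ((r + ((n:ℂ)-1)/2 + (β:ℂ)) + 2*((k : ℕ) : ℂ)))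
           + (((β:ℂ)+1+2*(K:ℂ))+((β:ℂ)+1)+(n:ℂ)-3)*(2*r-2*((β:ℂ)+1+2*(K:ℂ))-(n:ℂ)+3) * (∑ k ∈ Finset.range (K+2), cf r r' (((β:ℂ)+(K:ℂ)+(n:ℂ)/2)-1) (-(K:ℂ)) (k) * GG ((r + ((n:ℂ)-1)/2 + (β:ℂ)) + 2*((k : ℕ) : ℂ)))) := by
    rw [Finset.mul_sum, Finset.mul_sum, Finset.mul_sum, ← Finset.sum_add_distrib,
      ← Finset.sum_sub_distrib]
  rw [expand] at total
  linear_combination total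

set_option maxHeartbeats 2000000 in
theorem statement7 (n : ℕ) (hn : 3 ≤ n) (r r' : ℂ) :
    IsAdmissible n r r' (t1 n r r') ∧ t1 n r r' 0 0 = (Complex.Gamma (r + rho n))⁻¹ := by
  constructor
  · constructor
    · intro α α' h
      simp only [t1]
      rw [if_pos h]
    · intro α α' hle heven
      obtain ⟨m, hm⟩ := heven
      obtain ⟨K, hK⟩ : ∃ K, α = α' + 2*K := ⟨(α - α')/2, by omega⟩
      subst hK
      constructor
      · -- R1
        rcases K with _ | K₂
        · -- K = 0
          have h1 := t1_conv n r r' α' 0 ((α':ℂ)+((0 : ℕ):ℂ)+((n:ℂ)-2)/2) (-((0 : ℕ):ℂ))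
            (fun k : ℕ => r + ((n:ℂ)-1)/2 + (α':ℂ) + 2*(k:ℂ))
            (by push_cast; ring) (by push_cast; ring) (fun k => by push_cast; ring)
          have h2 := t1_conv n r r' (α'+1) 0 ((α':ℂ)+((0 : ℕ):ℂ)+((n:ℂ)-2)/2+1) (-((0 : ℕ):ℂ))
            (fun k : ℕ => r + ((n:ℂ)-1)/2 + (α':ℂ) + (2*(k:ℂ)+1))
            (by push_cast; ring) (by push_cast; ring) (fun k => by push_cast; ring)
          have hP := ascPochhammer_succ_eval (S := ℂ) α' (r' + ((n:ℂ)-2)/2)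
          have hS := sumR1 n r r' α' 0
          rw [show α'+2*0+1 = (α'+1)+2*0 from by omega] 
          rw [h1, h2, hP]
          push_cast at hS ⊢
          linear_combination ((ascPochhammer ℂ α').eval (r' + ((n:ℂ)-2)/2)) * hS
        · -- K = K₂+1
          have h1 := t1_conv n r r' α' (K₂+1) ((α':ℂ)+((K₂+1 : ℕ):ℂ)+((n:ℂ)-2)/2) (-((K₂+1 : ℕ):ℂ))
            (fun k : ℕ => r + ((n:ℂ)-1)/2 + (α':ℂ) + 2*(k:ℂ))
            (by push_cast; ring) (by push_cast; ring) (fun k => by push_cast; ring)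
          have h2 := t1_conv n r r' (α'+1) (K₂+1) ((α':ℂ)+((K₂+1 : ℕ):ℂ)+((n:ℂ)-2)/2+1) (-((K₂+1 : ℕ):ℂ))
            (fun k : ℕ => r + ((n:ℂ)-1)/2 + (α':ℂ) + (2*(k:ℂ)+1))
            (by push_cast; ring) (by push_cast; ring) (fun k => by push_cast; ring)
          have h3 := t1_conv n r r' (α'+1) K₂ ((α':ℂ)+((K₂+1 : ℕ):ℂ)+((n:ℂ)-2)/2) (-((K₂+1 : ℕ):ℂ)+1)
            (fun k : ℕ => r + ((n:ℂ)-1)/2 + (α':ℂ) + (2*(k:ℂ)+1))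
            (by push_cast; ring) (by push_cast; ring) (fun k => by push_cast; ring)
          have hzero : cf r r' ((α':ℂ)+((K₂+1 : ℕ):ℂ)+((n:ℂ)-2)/2) (-((K₂+1 : ℕ):ℂ)+1) (K₂+1) = 0 := by
            have hp : PP (K₂+1) (-((K₂+1 : ℕ):ℂ)+1) = 0 := by
              rw [show -((K₂+1 : ℕ):ℂ)+1 = -(K₂:ℂ) from by push_cast; ring]
              exact PP_neg_nat K₂
            simp [cf, hp]
          have h3' : t1 n r r' ((α'+1)+2*K₂) (α'+1)
              = (ascPochhammer ℂ (α'+1)).eval (r' + ((n:ℂ)-2)/2) *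
                ∑ k ∈ Finset.range (K₂+1+1),
                  cf r r' ((α':ℂ)+((K₂+1 : ℕ):ℂ)+((n:ℂ)-2)/2) (-((K₂+1 : ℕ):ℂ)+1) k
                    * GG ((fun k : ℕ => r + ((n:ℂ)-1)/2 + (α':ℂ) + (2*(k:ℂ)+1)) k) := by
            rw [h3]
            conv_rhs => rw [Finset.sum_range_succ]
            rw [hzero, zero_mul, add_zero]
          have hP := ascPochhammer_succ_eval (S := ℂ) α' (r' + ((n:ℂ)-2)/2)
          have hS := sumR1 n r r' α' (K₂+1)
          rw [show α'+2*(K₂+1)+1 = (α'+1)+2*(K₂+1) from by omega,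
            show α'+2*(K₂+1)-1 = (α'+1)+2*K₂ from by omega]
          rw [h1, h2, h3', hP]
          push_cast at hS ⊢
          linear_combination ((ascPochhammer ℂ α').eval (r' + ((n:ℂ)-2)/2)) * hS
      · -- R2
        intro hα'
        obtain ⟨β, hβ⟩ : ∃ β, α' = β + 1 := ⟨α'-1, by omega⟩
        subst hβ
        have hL := t1_conv n r r' (β+1) K ((β:ℂ)+(K:ℂ)+(n:ℂ)/2) (-(K:ℂ))
          (fun k : ℕ => (r + ((n:ℂ)-1)/2 + (β:ℂ)) + (2*(k:ℂ)+1))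
          (by push_cast; ring) (by push_cast; ring) (fun k => by push_cast; ring)
        have h1 := t1_conv n r r' β (K+1) ((β:ℂ)+(K:ℂ)+(n:ℂ)/2) (-(K:ℂ)-1)
          (fun k : ℕ => (r + ((n:ℂ)-1)/2 + (β:ℂ)) + 2*(k:ℂ))
          (by push_cast; ring) (by push_cast; ring) (fun k => by push_cast; ring)
        have h2 := t1_conv n r r' β K (((β:ℂ)+(K:ℂ)+(n:ℂ)/2)-1) (-(K:ℂ))
          (fun k : ℕ => (r + ((n:ℂ)-1)/2 + (β:ℂ)) + 2*(k:ℂ))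
          (by push_cast; ring) (by push_cast; ring) (fun k => by push_cast; ring)
        have hzL : cf r r' ((β:ℂ)+(K:ℂ)+(n:ℂ)/2) (-(K:ℂ)) (K+1) = 0 := by
          simp [cf, PP_neg_nat K]
        have hz2 : cf r r' (((β:ℂ)+(K:ℂ)+(n:ℂ)/2)-1) (-(K:ℂ)) (K+1) = 0 := by
          simp [cf, PP_neg_nat K]
        have hL' : t1 n r r' ((β+1)+2*K) (β+1)
            = (ascPochhammer ℂ (β+1)).eval (r' + ((n:ℂ)-2)/2) *
              ∑ k ∈ Finset.range (K+2),
                cf r r' ((β:ℂ)+(K:ℂ)+(n:ℂ)/2) (-(K:ℂ)) k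
                  * GG ((fun k : ℕ => (r + ((n:ℂ)-1)/2 + (β:ℂ)) + (2*(k:ℂ)+1)) k) := by
          rw [hL, show K+2 = K+1+1 from by omega]
          conv_rhs => rw [Finset.sum_range_succ]
          rw [hzL, zero_mul, add_zero]
        have h2' : t1 n r r' (β+2*K) β
            = (ascPochhammer ℂ β).eval (r' + ((n:ℂ)-2)/2) *
              ∑ k ∈ Finset.range (K+2),
                cf r r' (((β:ℂ)+(K:ℂ)+(n:ℂ)/2)-1) (-(K:ℂ)) k
                  * GG ((fun k : ℕ => (r + ((n:ℂ)-1)/2 + (β:ℂ)) + 2*(k:ℂ)) k) := by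
          rw [h2, show K+2 = K+1+1 from by omega]
          conv_rhs => rw [Finset.sum_range_succ]
          rw [hz2, zero_mul, add_zero]
        rw [show K+1+1 = K+2 from by omega] at h1
        have hP := ascPochhammer_succ_eval (S := ℂ) β (r' + ((n:ℂ)-2)/2)
        have hS := sumR2 n r r' β K
        rw [show β+1+2*K+1 = β+2*(K+1) from by omega, show β+1-1 = β from by omega,
          show β+1+2*K-1 = β+2*K from by omega]
        rw [show β+1+2*K = (β+1)+2*K from by omega] 
        rw [hL', h1, h2', hP]
        push_cast at hS ⊢
        linear_combination ((ascPochhammer ℂ β).eval (r' + ((n:ℂ)-2)/2)) * hS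
  · rw [t1, if_neg (by decide)]
    norm_num [Finset.sum_range_one, ascPochhammer_zero]


end
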